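/- (Equivalence Neumann → Dirichlet.) Assume α₂ > α₃ and q₀ > q₂. Let λ₁ > z₀ be the unique solution of the reduced Neumann system, i.e. Q(λ₁) = P(λ₂) where λ₂ ≥ 0 satisfies erf(λ₂·√(α₁/α₂)) = H(λ₁). Define A := B + (q₀·√(π·α₃)/k₃)·erf(λ₂·√(α₁/α₃)). Then A > B and Q(λ₁) = V(λ₂), where V is the Dirichlet function built from this A; consequently λ₁ coincides with the unique solution μ₁ > z₀ of the reduced Dirichlet system with data A, and λ₂ = μ₂. -/

import Mathlib

noncomputable section

/-- The error function `erf x = (2/√π) ∫₀ˣ exp(−s²) ds`. -/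
def erf (x : ℝ) : ℝ := (2 / Real.sqrt Real.pi) * ∫ s in (0:ℝ)..x, Real.exp (-(s^2))

/-- The complementary error function. -/
def erfc (x : ℝ) : ℝ := 1 - erf x

/-- Physical data of the three-phase Stefan problem: positive thermal conductivities,
specific heats, mass density, latent heats, and temperatures `B > C > D`. -/
structure Params where
  k₁ : ℝ
  k₂ : ℝ
  k₃ : ℝ
  c₁ : ℝ
  c₂ : ℝ
  c₃ : ℝ
  ρ : ℝ
  ℓ₁ : ℝ
  ℓ₂ : ℝ
  B : ℝ
  C : ℝ
  D : ℝ
  hk₁ : 0 < k₁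
  hk₂ : 0 < k₂
  hk₃ : 0 < k₃
  hc₁ : 0 < c₁
  hc₂ : 0 < c₂
  hc₃ : 0 < c₃
  hρ : 0 < ρ
  hℓ₁ : 0 < ℓ₁
  hℓ₂ : 0 < ℓ₂
  hBC : C < B
  hCD : D < C

namespace Params

/-- Thermal diffusivity of phase 1. -/
def α₁ (p : Params) : ℝ := p.k₁ / (p.ρ * p.c₁)

/-- Thermal diffusivity of phase 2. -/
def α₂ (p : Params) : ℝ := p.k₂ / (p.ρ * p.c₂)

/-- Thermal diffusivity of phase 3. -/
def α₃ (p : Params) : ℝ := p.k₃ / (p.ρ * p.c₃)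

/-- Stefan number `Ste₁ = c₁(C−D)/ℓ₁`. -/
def Ste₁ (p : Params) : ℝ := p.c₁ * (p.C - p.D) / p.ℓ₁

/-- Stefan number `Ste₂ = c₂(B−C)/ℓ₂`. -/
def Ste₂ (p : Params) : ℝ := p.c₂ * (p.B - p.C) / p.ℓ₂

/-- `φ(z) = z + (Ste₁/√π) exp(−z²)/erfc(z)`. -/
def φ (p : Params) (z : ℝ) : ℝ :=
  z + (p.Ste₁ / Real.sqrt Real.pi) * Real.exp (-(z^2)) / erfc z

/-- `H(z) = erf(z√(α₁/α₂)) − (Ste₂/√π)(ℓ₂/ℓ₁)√(k₂c₁/(k₁c₂)) exp(−z²α₁/α₂)/φ(z)`. -/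
def H (p : Params) (z : ℝ) : ℝ :=
  erf (z * Real.sqrt (p.α₁ / p.α₂)) -
    (p.Ste₂ / Real.sqrt Real.pi) * (p.ℓ₂ / p.ℓ₁) *
      Real.sqrt (p.k₂ * p.c₁ / (p.k₁ * p.c₂)) *
      (Real.exp (-(z^2) * (p.α₁ / p.α₂)) / p.φ z)

/-- `Q(z) = (ℓ₁/ℓ₂) φ(z) exp(z² α₁/α₂)`. -/
def Q (p : Params) (z : ℝ) : ℝ :=
  (p.ℓ₁ / p.ℓ₂) * p.φ z * Real.exp (z^2 * (p.α₁ / p.α₂))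

/-- The function `T` arising from the Robin (convective) boundary condition with
heat-transfer coefficient `h₀` and bulk temperature `Ainf`. -/
def T (p : Params) (h₀ Ainf : ℝ) (z : ℝ) : ℝ :=
  (p.Ste₂ / (Real.sqrt Real.pi * p.c₂)) * ((Ainf - p.B) / (p.B - p.C)) *
    Real.sqrt (p.k₃ * p.c₁ * p.c₃ / p.k₁) *
    (Real.exp (-(z^2) * p.α₁ * (1 / p.α₃ - 1 / p.α₂)) /
      (p.k₃ / (h₀ * Real.sqrt (Real.pi * p.α₃)) + erf (z * Real.sqrt (p.α₁ / p.α₃)))) -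
  z * Real.exp (z^2 * (p.α₁ / p.α₂))

/-- The function `V` arising from the Dirichlet boundary condition with temperature `A`. -/
def V (p : Params) (A : ℝ) (z : ℝ) : ℝ :=
  ((A - p.B) / p.ℓ₂) * Real.sqrt (p.c₁ * p.c₃ * p.k₃ / (Real.pi * p.k₁)) *
    (Real.exp (-(z^2) * (p.α₁ / p.α₃ - p.α₁ / p.α₂)) / erf (z * Real.sqrt (p.α₁ / p.α₃))) -
  z * Real.exp (z^2 * (p.α₁ / p.α₂))

/-- The function `P` arising from the Neumann boundary condition with flux coefficient `q₀`. -/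
def P (p : Params) (q₀ : ℝ) (z : ℝ) : ℝ :=
  Real.exp (z^2 * (p.α₁ / p.α₂)) *
    (-z + (q₀ / p.ℓ₂) * Real.sqrt (p.c₁ / (p.ρ * p.k₁)) * Real.exp (-(z^2) * (p.α₁ / p.α₃)))

/-- Critical heat-transfer coefficient `h₂`. -/
def h2 (p : Params) (Ainf z₀ : ℝ) : ℝ :=
  ((p.B - p.C) / (Ainf - p.B)) *
    Real.sqrt (p.k₂ * p.k₃ * p.c₂ / (Real.pi * p.c₃ * p.α₃)) *
    (1 / erf (z₀ * Real.sqrt (p.α₁ / p.α₂)))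

/-- Critical heat-flux coefficient `q₂`. -/
def q2 (p : Params) (z₀ : ℝ) : ℝ :=
  p.k₂ * (p.B - p.C) / (Real.sqrt (p.α₂ * Real.pi) * erf (z₀ * Real.sqrt (p.α₁ / p.α₂)))

end Params

section ErfAux

open MeasureTheory Set

lemma gauss_integrable : Integrable (fun s : ℝ => Real.exp (-(s^2))) := by
  have h := integrable_exp_neg_mul_sq (b := 1) one_pos
  simpa using h

lemma sqrt_pi_pos : 0 < Real.sqrt Real.pi := Real.sqrt_pos.mpr Real.pi_pos

lemma gauss_intervalIntegrable (a b : ℝ) :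
    IntervalIntegrable (fun s : ℝ => Real.exp (-(s^2))) volume a b :=
  gauss_integrable.intervalIntegrable

lemma gauss_intervalIntegral_pos {a b : ℝ} (hab : a < b) :
    0 < ∫ s in a..b, Real.exp (-(s^2)) := by
  apply intervalIntegral.integral_pos hab
  · exact (Real.continuous_exp.comp (by continuity)).continuousOn
  · exact fun x _ => (Real.exp_pos _).le
  · exact ⟨a, ⟨le_rfl, hab.le⟩, Real.exp_pos _⟩

lemma erf_strictMono : StrictMono erf := by
  intro x y hxy
  have key : (∫ s in (0:ℝ)..x, Real.exp (-(s^2))) < ∫ s in (0:ℝ)..y, Real.exp (-(s^2)) := by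
    have hsplit := intervalIntegral.integral_add_adjacent_intervals
      (gauss_intervalIntegrable 0 x) (gauss_intervalIntegrable x y)
    have := gauss_intervalIntegral_pos hxy
    linarith [hsplit]
  have h2 : (0:ℝ) < 2 / Real.sqrt Real.pi := by positivity
  exact mul_lt_mul_of_pos_left key h2

lemma erf_zero : erf 0 = 0 := by simp [erf]

lemma erf_pos {x : ℝ} (hx : 0 < x) : 0 < erf x := by
  simpa [erf_zero] using erf_strictMono hx

lemma gauss_total : (∫ s : ℝ, Real.exp (-(s^2))) = Real.sqrt Real.pi := by
  have h := integral_gaussian (1:ℝ)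
  simpa using h

lemma gauss_Ioi_zero : (∫ s in Ioi (0:ℝ), Real.exp (-(s^2))) = Real.sqrt Real.pi / 2 := by
  have h := integral_gaussian_Ioi (1:ℝ)
  simpa using h

lemma gauss_Iic (z : ℝ) :
    (∫ s in Iic z, Real.exp (-(s^2)))
      = Real.sqrt Real.pi - ∫ s in Ioi z, Real.exp (-(s^2)) := by
  have h := intervalIntegral.integral_Iic_add_Ioi (b := z) gauss_integrable.integrableOn
    gauss_integrable.integrableOn
  rw [← gauss_total]; linarith [h]

lemma gauss_interval_eq (z : ℝ) :
    (∫ s in (0:ℝ)..z, Real.exp (-(s^2)))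
      = (∫ s in Iic z, Real.exp (-(s^2))) - Real.sqrt Real.pi / 2 := by
  have h := intervalIntegral.integral_Iic_sub_Iic (a := (0:ℝ)) (b := z)
    (f := fun s : ℝ => Real.exp (-(s^2))) gauss_integrable.integrableOn
    gauss_integrable.integrableOn
  have h0 : (∫ s in Iic (0:ℝ), Real.exp (-(s^2))) = Real.sqrt Real.pi / 2 := by
    rw [gauss_Iic, gauss_Ioi_zero]; ring
  rw [← h, h0]

lemma erfc_eq_Ioi (z : ℝ) :
    erfc z = (2 / Real.sqrt Real.pi) * ∫ s in Ioi z, Real.exp (-(s^2)) := by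
  have hπ : Real.sqrt Real.pi ≠ 0 := ne_of_gt sqrt_pi_pos
  rw [erfc, erf, gauss_interval_eq, gauss_Iic]
  field_simp
  ring

lemma erfc_pos (z : ℝ) : 0 < erfc z := by
  rw [erfc_eq_Ioi]
  have h1 : 0 < ∫ s in Ioi z, Real.exp (-(s^2)) := by
    have hsplit : (∫ s in Ioi z, Real.exp (-(s^2)))
        = (∫ s in Ioc z (z+1), Real.exp (-(s^2))) + ∫ s in Ioi (z+1), Real.exp (-(s^2)) := by
      rw [← setIntegral_union (Ioc_disjoint_Ioi le_rfl) measurableSet_Ioi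
        gauss_integrable.integrableOn gauss_integrable.integrableOn,
        Ioc_union_Ioi_eq_Ioi (by linarith)]
    have h2 : 0 < ∫ s in Ioc z (z+1), Real.exp (-(s^2)) := by
      rw [← intervalIntegral.integral_of_le (by linarith : z ≤ z + 1)]
      exact gauss_intervalIntegral_pos (by linarith)
    have h3 : 0 ≤ ∫ s in Ioi (z+1), Real.exp (-(s^2)) :=
      setIntegral_nonneg measurableSet_Ioi (fun x _ => (Real.exp_pos _).le)
    linarith
  positivity

lemma erf_lt_one (z : ℝ) : erf z < 1 := by
  have := erfc_pos z
  rw [erfc] at this; linarith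

/-- The shift identity for the Gaussian tail integral. -/
lemma gauss_Ioi_shift (x c : ℝ) :
    (∫ s in Ioi (x + c), Real.exp (-(s^2))) = ∫ s in Ioi x, Real.exp (-((s + c)^2)) := by
  have hmp : MeasurePreserving (fun s : ℝ => s + c) volume volume :=
    measurePreserving_add_right volume c
  have hemb : MeasurableEmbedding (fun s : ℝ => s + c) :=
    (Homeomorph.addRight c).measurableEmbedding
  have h := hmp.setIntegral_preimage_emb hemb
    (fun s : ℝ => Real.exp (-(s^2))) (Ioi (x + c))
  have hpre : (fun s : ℝ => s + c) ⁻¹' (Ioi (x + c)) = Ioi x := by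
    ext t; simp [Set.mem_preimage]
  rw [hpre] at h
  exact h.symm

/-- Mills-type inequality: monotonicity of `exp(−z²)/erfc z`. -/
lemma mills_mono {x y : ℝ} (hxy : x ≤ y) :
    Real.exp (-(x^2)) * (∫ s in Ioi y, Real.exp (-(s^2)))
      ≤ Real.exp (-(y^2)) * ∫ s in Ioi x, Real.exp (-(s^2)) := by
  set c := y - x with hc
  have hyx : y = x + c := by rw [hc]; ring
  rw [hyx, gauss_Ioi_shift x c, ← integral_const_mul, ← integral_const_mul]
  have hint1 : IntegrableOn (fun s : ℝ => Real.exp (-(x^2)) * Real.exp (-((s + c)^2)))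
      (Ioi x) volume := by
    have : Integrable (fun s : ℝ => Real.exp (-((s + c)^2))) := by
      have hmp : MeasurePreserving (fun s : ℝ => s + c) volume volume :=
        measurePreserving_add_right volume c
      exact (hmp.integrable_comp gauss_integrable.1).mpr gauss_integrable
    exact (this.const_mul _).integrableOn
  have hint2 : IntegrableOn (fun s : ℝ => Real.exp (-((x+c)^2)) * Real.exp (-(s^2)))
      (Ioi x) volume := (gauss_integrable.const_mul _).integrableOn
  refine setIntegral_mono_on hint1 hint2 measurableSet_Ioi (fun s hs => ?_)
  rw [← Real.exp_add, ← Real.exp_add]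
  apply Real.exp_le_exp.mpr
  have hs' : x ≤ s := le_of_lt hs
  have hc0 : 0 ≤ c := by linarith
  nlinarith [mul_nonneg (sub_nonneg.mpr hs') hc0]

/-- Monotonicity of `exp(−z²)/erfc z`. -/
lemma mills_ratio_mono {x y : ℝ} (hxy : x ≤ y) :
    Real.exp (-(x^2)) / erfc x ≤ Real.exp (-(y^2)) / erfc y := by
  rw [div_le_div_iff₀ (erfc_pos x) (erfc_pos y)]
  rw [erfc_eq_Ioi, erfc_eq_Ioi]
  have h := mills_mono hxy
  have h2 : (0:ℝ) ≤ 2 / Real.sqrt Real.pi := by positivity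
  calc Real.exp (-(x^2)) * ((2 / Real.sqrt Real.pi) * ∫ s in Ioi y, Real.exp (-(s^2)))
      = (2 / Real.sqrt Real.pi) * (Real.exp (-(x^2)) * ∫ s in Ioi y, Real.exp (-(s^2))) := by ring
    _ ≤ (2 / Real.sqrt Real.pi) * (Real.exp (-(y^2)) * ∫ s in Ioi x, Real.exp (-(s^2))) :=
        mul_le_mul_of_nonneg_left h h2
    _ = Real.exp (-(y^2)) * ((2 / Real.sqrt Real.pi) * ∫ s in Ioi x, Real.exp (-(s^2))) := by ring

end ErfAux

section ParamsAux

open MeasureTheory Set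

namespace Params

variable (p : Params)

lemma α₁_pos : 0 < p.α₁ := div_pos p.hk₁ (mul_pos p.hρ p.hc₁)
lemma α₂_pos : 0 < p.α₂ := div_pos p.hk₂ (mul_pos p.hρ p.hc₂)
lemma α₃_pos : 0 < p.α₃ := div_pos p.hk₃ (mul_pos p.hρ p.hc₃)
lemma Ste₁_pos : 0 < p.Ste₁ := div_pos (mul_pos p.hc₁ (sub_pos.mpr p.hCD)) p.hℓ₁
lemma Ste₂_pos : 0 < p.Ste₂ := div_pos (mul_pos p.hc₂ (sub_pos.mpr p.hBC)) p.hℓ₂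

lemma φ_pos {z : ℝ} (hz : 0 < z) : 0 < p.φ z := by
  unfold Params.φ
  have h := erfc_pos z
  have h1 : 0 < p.Ste₁ / Real.sqrt Real.pi * Real.exp (-(z^2)) / erfc z :=
    div_pos (mul_pos (div_pos p.Ste₁_pos sqrt_pi_pos) (Real.exp_pos _)) h
  linarith

lemma φ_mono {x y : ℝ} (hxy : x ≤ y) : p.φ x ≤ p.φ y := by
  unfold Params.φ
  have h := mills_ratio_mono hxy
  have hC : 0 ≤ p.Ste₁ / Real.sqrt Real.pi := (div_pos p.Ste₁_pos sqrt_pi_pos).le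
  have h2 : p.Ste₁ / Real.sqrt Real.pi * Real.exp (-(x^2)) / erfc x
      ≤ p.Ste₁ / Real.sqrt Real.pi * Real.exp (-(y^2)) / erfc y := by
    rw [mul_div_assoc, mul_div_assoc]
    exact mul_le_mul_of_nonneg_left h hC
  linarith

lemma Q_strict {x y : ℝ} (hx : 0 < x) (hxy : x < y) : p.Q x < p.Q y := by
  unfold Params.Q
  have hr : 0 < p.α₁ / p.α₂ := div_pos p.α₁_pos p.α₂_pos
  have hex : Real.exp (x^2 * (p.α₁ / p.α₂)) < Real.exp (y^2 * (p.α₁ / p.α₂)) := by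
    apply Real.exp_lt_exp.mpr
    have hsq : x^2 < y^2 := by nlinarith
    nlinarith
  have hφ := p.φ_mono hxy.le
  have hφx := p.φ_pos hx
  have hl : 0 < p.ℓ₁ / p.ℓ₂ := div_pos p.hℓ₁ p.hℓ₂
  have he0 : 0 < Real.exp (x^2 * (p.α₁ / p.α₂)) := Real.exp_pos _
  nlinarith [mul_pos hl hφx, mul_le_mul_of_nonneg_left hφ hl.le]

lemma H_strict {x y : ℝ} (hx : 0 < x) (hxy : x < y) : p.H x < p.H y := by
  unfold Params.H
  have ha : 0 < Real.sqrt (p.α₁ / p.α₂) := Real.sqrt_pos.mpr (div_pos p.α₁_pos p.α₂_pos)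
  have herf : erf (x * Real.sqrt (p.α₁ / p.α₂)) < erf (y * Real.sqrt (p.α₁ / p.α₂)) :=
    erf_strictMono (by nlinarith)
  have hK : 0 ≤ p.Ste₂ / Real.sqrt Real.pi * (p.ℓ₂ / p.ℓ₁) *
      Real.sqrt (p.k₂ * p.c₁ / (p.k₁ * p.c₂)) :=
    mul_nonneg (mul_nonneg (div_nonneg p.Ste₂_pos.le sqrt_pi_pos.le)
      (div_nonneg p.hℓ₂.le p.hℓ₁.le)) (Real.sqrt_nonneg _)
  have hr : 0 < p.α₁ / p.α₂ := div_pos p.α₁_pos p.α₂_pos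
  have hquot : Real.exp (-(y^2) * (p.α₁ / p.α₂)) / p.φ y
      ≤ Real.exp (-(x^2) * (p.α₁ / p.α₂)) / p.φ x := by
    apply div_le_div₀ (Real.exp_pos _).le _ (p.φ_pos hx) (p.φ_mono hxy.le)
    apply Real.exp_le_exp.mpr
    have hsq : x^2 ≤ y^2 := by nlinarith
    nlinarith [mul_le_mul_of_nonneg_right hsq hr.le]
  have := mul_le_mul_of_nonneg_left hquot hK
  linarith

lemma V_strict {A x y : ℝ} (hA : p.B < A) (hα : p.α₃ < p.α₂) (hx : 0 < x) (hxy : x < y) :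
    p.V A y < p.V A x := by
  unfold Params.V
  have hy : 0 < y := hx.trans hxy
  have hb : 0 < Real.sqrt (p.α₁ / p.α₃) := Real.sqrt_pos.mpr (div_pos p.α₁_pos p.α₃_pos)
  have hd : 0 < p.α₁ / p.α₃ - p.α₁ / p.α₂ := by
    have h1 : p.α₁ / p.α₂ < p.α₁ / p.α₃ := div_lt_div_of_pos_left p.α₁_pos p.α₃_pos hα
    linarith
  have hcoef : 0 < (A - p.B) / p.ℓ₂ * Real.sqrt (p.c₁ * p.c₃ * p.k₃ / (Real.pi * p.k₁)) := by
    apply mul_pos (div_pos (sub_pos.mpr hA) p.hℓ₂)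
    apply Real.sqrt_pos.mpr
    have := p.hc₁; have := p.hc₃; have := p.hk₃; have := p.hk₁; have := Real.pi_pos
    positivity
  have herfx : 0 < erf (x * Real.sqrt (p.α₁ / p.α₃)) := erf_pos (mul_pos hx hb)
  have herfy : 0 < erf (y * Real.sqrt (p.α₁ / p.α₃)) := erf_pos (mul_pos hy hb)
  have herfle : erf (x * Real.sqrt (p.α₁ / p.α₃)) ≤ erf (y * Real.sqrt (p.α₁ / p.α₃)) :=
    (erf_strictMono (by nlinarith)).le
  have hexp : Real.exp (-(y^2) * (p.α₁ / p.α₃ - p.α₁ / p.α₂))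
      < Real.exp (-(x^2) * (p.α₁ / p.α₃ - p.α₁ / p.α₂)) := by
    apply Real.exp_lt_exp.mpr
    have hsq : x^2 < y^2 := by nlinarith
    nlinarith [mul_lt_mul_of_pos_right hsq hd]
  have hexp0 : 0 < Real.exp (-(y^2) * (p.α₁ / p.α₃ - p.α₁ / p.α₂)) := Real.exp_pos _
  have hq : Real.exp (-(y^2) * (p.α₁ / p.α₃ - p.α₁ / p.α₂)) / erf (y * Real.sqrt (p.α₁ / p.α₃))
      < Real.exp (-(x^2) * (p.α₁ / p.α₃ - p.α₁ / p.α₂)) / erf (x * Real.sqrt (p.α₁ / p.α₃)) := by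
    rw [div_lt_div_iff₀ herfy herfx]
    nlinarith
  have hterm2 : x * Real.exp (x^2 * (p.α₁ / p.α₂)) < y * Real.exp (y^2 * (p.α₁ / p.α₂)) := by
    have hr : 0 < p.α₁ / p.α₂ := div_pos p.α₁_pos p.α₂_pos
    have : Real.exp (x^2 * (p.α₁ / p.α₂)) ≤ Real.exp (y^2 * (p.α₁ / p.α₂)) := by
      apply Real.exp_le_exp.mpr
      have hsq : x^2 ≤ y^2 := by nlinarith
      nlinarith [mul_le_mul_of_nonneg_right hsq hr.le]
    nlinarith [Real.exp_pos (x^2 * (p.α₁ / p.α₂))]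
  have := mul_lt_mul_of_pos_left hq hcoef
  linarith

lemma V_eq_P (q₀ z : ℝ) (hz : 0 < erf (z * Real.sqrt (p.α₁ / p.α₃))) :
    p.V (p.B + (q₀ * Real.sqrt (Real.pi * p.α₃) / p.k₃) * erf (z * Real.sqrt (p.α₁ / p.α₃))) z
      = p.P q₀ z := by
  have hkey : Real.sqrt (Real.pi * p.α₃) * Real.sqrt (p.c₁ * p.c₃ * p.k₃ / (Real.pi * p.k₁))
      = p.k₃ * Real.sqrt (p.c₁ / (p.ρ * p.k₁)) := by
    rw [← Real.sqrt_mul (mul_nonneg Real.pi_pos.le p.α₃_pos.le)]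
    have h2 : Real.pi * p.α₃ * (p.c₁ * p.c₃ * p.k₃ / (Real.pi * p.k₁))
        = p.k₃^2 * (p.c₁ / (p.ρ * p.k₁)) := by
      unfold Params.α₃
      have := p.hρ.ne'; have := p.hc₃.ne'; have := p.hk₁.ne'; have := Real.pi_pos.ne'
      field_simp
    rw [h2, Real.sqrt_mul (sq_nonneg _), Real.sqrt_sq p.hk₃.le]
  have hE : Real.exp (-(z^2) * (p.α₁ / p.α₃ - p.α₁ / p.α₂))
      = Real.exp (-(z^2) * (p.α₁ / p.α₃)) * Real.exp (z^2 * (p.α₁ / p.α₂)) := by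
    rw [← Real.exp_add]; ring_nf
  unfold Params.V Params.P
  rw [hE, add_sub_cancel_left]
  set e := erf (z * Real.sqrt (p.α₁ / p.α₃)) with he
  set E3 := Real.exp (-(z^2) * (p.α₁ / p.α₃)) with hE3
  set E2 := Real.exp (z^2 * (p.α₁ / p.α₂)) with hE2
  set s3 := Real.sqrt (Real.pi * p.α₃) with hs3
  set S := Real.sqrt (p.c₁ * p.c₃ * p.k₃ / (Real.pi * p.k₁)) with hS
  set sc := Real.sqrt (p.c₁ / (p.ρ * p.k₁)) with hsc
  have hzne : e ≠ 0 := hz.ne'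
  have hk₃ne : p.k₃ ≠ 0 := p.hk₃.ne'
  have hℓ₂ne : p.ℓ₂ ≠ 0 := p.hℓ₂.ne'
  field_simp
  linear_combination (E2 * q₀ * E3) * hkey

end Params

end ParamsAux

/-- Equivalence Neumann → Dirichlet. -/
theorem neumann_to_dirichlet (p : Params) (q₀ z₀ lam₁ lam₂ A : ℝ)
    (hα : p.α₃ < p.α₂)
    (hz₀ : 0 < z₀ ∧ p.H z₀ = 0)
    (hq₀ : p.q2 z₀ < q₀)
    (hlam₁ : z₀ < lam₁) (hlam₂ : 0 ≤ lam₂)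
    (herf : erf (lam₂ * Real.sqrt (p.α₁ / p.α₂)) = p.H lam₁)
    (hsys : p.Q lam₁ = p.P q₀ lam₂)
    (hA : A = p.B + (q₀ * Real.sqrt (Real.pi * p.α₃) / p.k₃) *
      erf (lam₂ * Real.sqrt (p.α₁ / p.α₃))) :
    p.B < A ∧ p.Q lam₁ = p.V A lam₂ ∧
    ∀ μ₁ μ₂ : ℝ, z₀ < μ₁ → 0 ≤ μ₂ →
      erf (μ₂ * Real.sqrt (p.α₁ / p.α₂)) = p.H μ₁ →
      p.Q μ₁ = p.V A μ₂ → μ₁ = lam₁ ∧ μ₂ = lam₂ := by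
  obtain ⟨hz₀pos, hz₀H⟩ := hz₀
  have ha : 0 < Real.sqrt (p.α₁ / p.α₂) := Real.sqrt_pos.mpr (div_pos p.α₁_pos p.α₂_pos)
  have hb : 0 < Real.sqrt (p.α₁ / p.α₃) := Real.sqrt_pos.mpr (div_pos p.α₁_pos p.α₃_pos)
  have hq2pos : 0 < p.q2 z₀ := by
    unfold Params.q2
    apply div_pos (mul_pos p.hk₂ (sub_pos.mpr p.hBC))
    exact mul_pos (Real.sqrt_pos.mpr (mul_pos p.α₂_pos Real.pi_pos))
      (erf_pos (mul_pos hz₀pos ha))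
  have hq₀pos : 0 < q₀ := hq2pos.trans hq₀
  have hHlam : 0 < p.H lam₁ := by
    rw [← hz₀H]; exact p.H_strict hz₀pos hlam₁
  have key₂ : ∀ w₂ w₁ : ℝ, 0 ≤ w₂ → z₀ < w₁ →
      erf (w₂ * Real.sqrt (p.α₁ / p.α₂)) = p.H w₁ → 0 < w₂ := by
    intro w₂ w₁ hw₂ hw₁ hw
    rcases hw₂.lt_or_eq with h | h
    · exact h
    · exfalso
      have hH : 0 < p.H w₁ := by rw [← hz₀H]; exact p.H_strict hz₀pos hw₁
      rw [← h, zero_mul, erf_zero] at hw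
      linarith
  have hlam₂pos : 0 < lam₂ := key₂ lam₂ lam₁ hlam₂ hlam₁ herf
  have herfb : 0 < erf (lam₂ * Real.sqrt (p.α₁ / p.α₃)) := erf_pos (mul_pos hlam₂pos hb)
  have hs3pos : 0 < Real.sqrt (Real.pi * p.α₃) :=
    Real.sqrt_pos.mpr (mul_pos Real.pi_pos p.α₃_pos)
  have hBA : p.B < A := by
    rw [hA]
    have : 0 < q₀ * Real.sqrt (Real.pi * p.α₃) / p.k₃ *
        erf (lam₂ * Real.sqrt (p.α₁ / p.α₃)) :=
      mul_pos (div_pos (mul_pos hq₀pos hs3pos) p.hk₃) herfb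
    linarith
  have hQV : p.Q lam₁ = p.V A lam₂ := by
    rw [hA, p.V_eq_P q₀ lam₂ herfb]; exact hsys
  refine ⟨hBA, hQV, ?_⟩
  intro μ₁ μ₂ hμ₁ hμ₂ herf' hsys'
  have hμ₁pos : 0 < μ₁ := hz₀pos.trans hμ₁
  have hlam₁pos : 0 < lam₁ := hz₀pos.trans hlam₁
  have hμ₂pos : 0 < μ₂ := key₂ μ₂ μ₁ hμ₂ hμ₁ herf'
  rcases lt_trichotomy μ₁ lam₁ with h | h | h
  · exfalso
    have hH : p.H μ₁ < p.H lam₁ := p.H_strict hμ₁pos h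
    have he : erf (μ₂ * Real.sqrt (p.α₁ / p.α₂)) < erf (lam₂ * Real.sqrt (p.α₁ / p.α₂)) := by
      rw [herf', herf]; exact hH
    have hμlt : μ₂ < lam₂ := by
      have := erf_strictMono.lt_iff_lt.mp he
      exact (mul_lt_mul_iff_of_pos_right ha).mp this
    have hV : p.V A lam₂ < p.V A μ₂ := p.V_strict hBA hα hμ₂pos hμlt
    have hQ : p.Q μ₁ < p.Q lam₁ := p.Q_strict hμ₁pos h
    rw [hsys', hQV] at hQ
    linarith
  · refine ⟨h, ?_⟩
    have he : erf (μ₂ * Real.sqrt (p.α₁ / p.α₂)) = erf (lam₂ * Real.sqrt (p.α₁ / p.α₂)) := by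
      rw [herf', herf, h]
    have := erf_strictMono.injective he
    exact mul_right_cancel₀ ha.ne' this
  · exfalso
    have hH : p.H lam₁ < p.H μ₁ := p.H_strict hlam₁pos h
    have he : erf (lam₂ * Real.sqrt (p.α₁ / p.α₂)) < erf (μ₂ * Real.sqrt (p.α₁ / p.α₂)) := by
      rw [herf', herf]; exact hH
    have hμlt : lam₂ < μ₂ := by
      have := erf_strictMono.lt_iff_lt.mp he
      exact (mul_lt_mul_iff_of_pos_right ha).mp this
    have hV : p.V A μ₂ < p.V A lam₂ := p.V_strict hBA hα hlam₂pos hμlt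
    have hQ : p.Q lam₁ < p.Q μ₁ := p.Q_strict hlam₁pos h
    rw [hsys', hQV] at hQ
    linarith
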